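/- The function V(x₀, x₁) = ln(1 + 5x₀²) + x₁² is a global Lyapunov function for the system ẋ₀ = -x₀ + x₀x₁, ẋ₁ = -x₁: it satisfies V(0) = 0, V(x) > 0 for x ≠ 0, V(x) → ∞ as ‖x‖ → ∞, and ∇V(x) · f(x) = (-5x₀² - 5x₀²x₁² - 5(x₀ - x₀x₁)² - 2x₁²)/(1 + 5x₀²) ≤ 0 for all (x₀, x₁). -/

import Mathlib

open Filter

noncomputable def gvec (x : EuclideanSpace ℝ (Fin 2)) : EuclideanSpace ℝ (Fin 2) :=
  (WithLp.equiv 2 (Fin 2 → ℝ)).symm ![10 * x 0 / (1 + 5 * (x 0)^2), 2 * x 1]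

theorem hasGrad (V : EuclideanSpace ℝ (Fin 2) → ℝ)
    (hV : ∀ x, V x = Real.log (1 + 5 * (x 0) ^ 2) + (x 1) ^ 2)
    (x : EuclideanSpace ℝ (Fin 2)) : HasGradientAt V (gvec x) x := by
  rw [hasGradientAt_iff_hasFDerivAt]
  have hpos : 0 < 1 + 5 * (x 0)^2 := by positivity
  set p0 : EuclideanSpace ℝ (Fin 2) →L[ℝ] ℝ := EuclideanSpace.proj (0 : Fin 2)
  set p1 : EuclideanSpace ℝ (Fin 2) →L[ℝ] ℝ := EuclideanSpace.proj (1 : Fin 2)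
  have hp0 : HasFDerivAt (fun y : EuclideanSpace ℝ (Fin 2) => y 0) p0 x := p0.hasFDerivAt
  have hp1 : HasFDerivAt (fun y : EuclideanSpace ℝ (Fin 2) => y 1) p1 x := p1.hasFDerivAt
  have h1 : HasFDerivAt (fun y : EuclideanSpace ℝ (Fin 2) => 1 + 5 * (y 0 * y 0))
      ((10 * x 0) • p0) x := by
    refine (((hp0.mul hp0).const_mul (5:ℝ)).const_add (1:ℝ)).congr_fderiv ?_
    ext v; simp [p0]; ring
  have h0 : HasFDerivAt (fun y : EuclideanSpace ℝ (Fin 2) => Real.log (1 + 5 * (y 0 * y 0)))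
      ((10 * x 0 / (1 + 5 * (x 0)^2)) • p0) x := by
    refine ((Real.hasDerivAt_log ?_).comp_hasFDerivAt x h1).congr_fderiv ?_
    · rw [show x 0 * x 0 = (x 0)^2 by ring]; exact hpos.ne'
    · ext v; simp [p0]; ring
  have h2 : HasFDerivAt (fun y : EuclideanSpace ℝ (Fin 2) => y 1 * y 1)
      ((2 * x 1) • p1) x := by
    refine (hp1.mul hp1).congr_fderiv ?_
    ext v; simp [p1]; ring
  have hsum := h0.add h2
  have hVeq : V = fun y : EuclideanSpace ℝ (Fin 2) =>
      Real.log (1 + 5 * (y 0 * y 0)) + y 1 * y 1 := by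
    funext y; rw [hV]; ring_nf
  rw [hVeq]
  refine hsum.congr_fderiv ?_
  ext v
  simp [gvec, InnerProductSpace.toDual_apply_apply, p0, p1,
    EuclideanSpace.inner_eq_star_dotProduct, Matrix.vecHead, Matrix.vecTail]
  ring

/-- `V(x₀,x₁) = ln(1+5x₀²) + x₁²` is a global Lyapunov function for the system
`ẋ₀ = -x₀ + x₀x₁, ẋ₁ = -x₁`. -/
theorem log_lyapunov_function
    (V : EuclideanSpace ℝ (Fin 2) → ℝ)
    (hV : ∀ x, V x = Real.log (1 + 5 * (x 0) ^ 2) + (x 1) ^ 2)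
    (f : EuclideanSpace ℝ (Fin 2) → EuclideanSpace ℝ (Fin 2))
    (hf : ∀ x, f x 0 = -(x 0) + x 0 * x 1 ∧ f x 1 = -(x 1)) :
    V 0 = 0 ∧ (∀ x, x ≠ 0 → 0 < V x) ∧
    Tendsto V (comap norm atTop) atTop ∧
    ∀ x, (∑ i, gradient V x i * f x i =
        (-5 * (x 0) ^ 2 - 5 * (x 0) ^ 2 * (x 1) ^ 2
          - 5 * (x 0 - x 0 * x 1) ^ 2 - 2 * (x 1) ^ 2) / (1 + 5 * (x 0) ^ 2)) ∧
      ∑ i, gradient V x i * f x i ≤ 0 := by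
  refine ⟨?_, ?_, ?_, ?_⟩
  · rw [hV]; norm_num
  · intro x hx
    rw [hV]
    have hlog : 0 ≤ Real.log (1 + 5 * (x 0)^2) := by
      apply Real.log_nonneg; nlinarith [sq_nonneg (x 0)]
    by_cases h0 : x 0 = 0
    · have h1 : x 1 ≠ 0 := by
        intro h1
        apply hx
        ext i
        fin_cases i <;> simp [h0, h1]
      have : 0 < (x 1)^2 := by positivity
      linarith
    · have : 0 < Real.log (1 + 5 * (x 0)^2) := by
        apply Real.log_pos; have : 0 < (x 0)^2 := by positivity
        nlinarith
      nlinarith [sq_nonneg (x 1)]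
  · have hbound : ∀ x : EuclideanSpace ℝ (Fin 2), Real.log (1 + ‖x‖^2) ≤ V x := by
      intro x
      have hn : ‖x‖^2 = (x 0)^2 + (x 1)^2 := by
        rw [EuclideanSpace.norm_eq, Real.sq_sqrt (by positivity)]
        simp [Fin.sum_univ_two, sq_abs]
      rw [hV, hn]
      set a := (x 0)^2 with ha
      set b := (x 1)^2 with hb
      have ha0 : 0 ≤ a := sq_nonneg _
      have hb0 : 0 ≤ b := sq_nonneg _
      have step1 : Real.log (1 + (a + b)) ≤ Real.log ((1 + 5*a) * (1 + b)) := by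
        apply Real.log_le_log (by linarith); nlinarith
      have step2 : Real.log ((1 + 5*a) * (1 + b)) =
          Real.log (1 + 5*a) + Real.log (1 + b) :=
        Real.log_mul (by nlinarith) (by nlinarith)
      have step3 : Real.log (1 + b) ≤ b := by
        have := Real.log_le_sub_one_of_pos (x := 1 + b) (by linarith)
        linarith
      calc Real.log (1 + (a + b)) ≤ Real.log (1+5*a) + Real.log (1+b) := by
              rw [← step2]; exact step1
        _ ≤ Real.log (1+5*a) + b := by linarith
    refine tendsto_atTop_mono hbound ?_
    have h1 : Tendsto (fun t : ℝ => Real.log (1 + t^2)) atTop atTop := by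
      apply Real.tendsto_log_atTop.comp
      apply tendsto_atTop_add_const_left
      exact tendsto_pow_atTop two_ne_zero
    exact h1.comp tendsto_comap
  · intro x
    have hg : gradient V x = gvec x := (hasGrad V hV x).gradient
    have hpos : (0:ℝ) < 1 + 5 * (x 0)^2 := by positivity
    have hsum : ∑ i, gradient V x i * f x i =
        (-5 * (x 0) ^ 2 - 5 * (x 0) ^ 2 * (x 1) ^ 2
          - 5 * (x 0 - x 0 * x 1) ^ 2 - 2 * (x 1) ^ 2) / (1 + 5 * (x 0) ^ 2) := by
      rw [hg, Fin.sum_univ_two, (hf x).1, (hf x).2]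
      simp only [gvec]
      simp
      field_simp
      ring
    refine ⟨hsum, ?_⟩
    rw [hsum]
    apply div_nonpos_of_nonpos_of_nonneg
    · nlinarith [sq_nonneg (x 0), sq_nonneg (x 1), sq_nonneg (x 0 - x 0 * x 1),
        sq_nonneg (x 0 * x 1)]
    · linarith
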